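/- Let f : ℝ → ℝ be continuously differentiable with compact support. Then the discrete kinetic energy converges to the continuum kinetic energy: the function a ↦ (1/a) · ∑'_{i : ℤ} (f ((i+1) · a) − f (i · a))² tends to ∫_ℝ (deriv f x)² dx as a → 0 along a > 0. -/

import Mathlib

open Filter Topology MeasureTheory Set Asymptotics

/-- For a continuously differentiable, compactly supported `f : ℝ → ℝ`, the discrete
kinetic energy `(1/a) ∑_{i : ℤ} (f ((i+1) a) - f (i a))²` converges, as the lattice
spacing `a → 0⁺`, to the continuum kinetic energy `∫ (f' x)² dx`. -/
theorem discrete_kinetic_tendsto_integral (f : ℝ → ℝ)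
    (hf : ContDiff ℝ 1 f) (hsupp : HasCompactSupport f) :
    Tendsto (fun a : ℝ => (1 / a) * ∑' i : ℤ, (f ((i + 1) * a) - f (i * a)) ^ 2)
      (𝓝[>] (0 : ℝ)) (𝓝 (∫ x : ℝ, (deriv f x) ^ 2)) := by
  have hdc : Continuous (deriv f) := hf.continuous_deriv le_rfl
  obtain ⟨M, hM⟩ := (hsupp.deriv).exists_bound_of_continuous hdc
  have hM0 : 0 ≤ M := le_trans (norm_nonneg _) (hM 0)
  -- the step function
  set F : ℝ → ℝ → ℝ := fun a x => ((f (a * ⌊x / a⌋ + a) - f (a * ⌊x / a⌋)) / a) ^ 2 with hF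
  -- Lipschitz estimate
  have hlip : ∀ b c : ℝ, |f b - f c| ≤ M * |b - c| := by
    intro b c
    have := Convex.norm_image_sub_le_of_norm_deriv_le
      (f := f) (s := Set.univ) (C := M)
      (fun x _ => (hf.differentiable one_ne_zero) x)
      (fun x _ => hM x) convex_univ (Set.mem_univ c) (Set.mem_univ b)
    simpa [Real.norm_eq_abs] using this
  -- floor point estimates
  have hfloor_le : ∀ a x : ℝ, 0 < a → a * (⌊x / a⌋ : ℝ) ≤ x := by
    intro a x ha
    have h1 : (⌊x / a⌋ : ℝ) ≤ x / a := Int.floor_le _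
    calc a * (⌊x / a⌋ : ℝ) ≤ a * (x / a) := by nlinarith
    _ = x := by field_simp
  have hfloor_gt : ∀ a x : ℝ, 0 < a → x < a * (⌊x / a⌋ : ℝ) + a := by
    intro a x ha
    have h1 : x / a < (⌊x / a⌋ : ℝ) + 1 := Int.lt_floor_add_one _
    have := (div_lt_iff₀ ha).mp h1
    nlinarith
  -- the compact "bound" region
  set K2 : Set ℝ := Metric.cthickening 2 (tsupport f) with hK2
  have hK2c : IsCompact K2 := Metric.isCompact_iff_isClosed_bounded.2
    ⟨Metric.isClosed_cthickening, hsupp.isBounded.cthickening⟩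
  set bound : ℝ → ℝ := K2.indicator (fun _ => M ^ 2) with hbound
  have hbound_int : Integrable bound := by
    rw [hbound, integrable_indicator_iff hK2c.measurableSet]
    exact integrableOn_const hK2c.measure_lt_top.ne
  -- pointwise bound
  have hFbound : ∀ a : ℝ, a ∈ Set.Ioc (0:ℝ) 1 → ∀ x : ℝ, ‖F a x‖ ≤ bound x := by
    rintro a ⟨ha, ha1⟩ x
    set c : ℝ := a * (⌊x / a⌋ : ℝ) with hc
    have hc_le : c ≤ x := hfloor_le a x ha
    have hx_lt : x < c + a := hfloor_gt a x ha
    by_cases hx : x ∈ K2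
    · have hb1 : bound x = M ^ 2 := Set.indicator_of_mem hx _
      have h1 : |f (c + a) - f c| ≤ M * a := by
        have := hlip (c + a) c
        simpa [abs_of_pos ha] using this
      have h2 : |(f (c + a) - f c) / a| ≤ M := by
        rw [abs_div, abs_of_pos ha, div_le_iff₀ ha]
        exact h1
      have h3 : F a x = ((f (c + a) - f c) / a) ^ 2 := rfl
      rw [h3, Real.norm_of_nonneg (sq_nonneg _), hb1, ← sq_abs]
      exact pow_le_pow_left₀ (abs_nonneg _) h2 2
    · have hcK : c ∉ tsupport f := by
        intro h
        exact hx (Metric.mem_cthickening_of_dist_le x c 2 _ h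
          (by rw [Real.dist_eq]; rw [abs_of_nonneg (by linarith)]; linarith))
      have hbK : c + a ∉ tsupport f := by
        intro h
        exact hx (Metric.mem_cthickening_of_dist_le x (c + a) 2 _ h
          (by rw [Real.dist_eq]; rw [abs_of_nonpos (by linarith)]; linarith))
      have h1 : f c = 0 := image_eq_zero_of_notMem_tsupport hcK
      have h2 : f (c + a) = 0 := image_eq_zero_of_notMem_tsupport hbK
      have h3 : F a x = 0 := by simp [hF, ← hc, h1, h2]
      rw [h3]
      simp only [norm_zero]
      exact Set.indicator_nonneg (fun _ _ => sq_nonneg M) x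
  -- measurability
  have hFmeas : ∀ a : ℝ, 0 < a → AEStronglyMeasurable (F a) volume := by
    intro a ha
    have h1 : Measurable fun x : ℝ => a * (⌊x / a⌋ : ℝ) :=
      (measurable_const.mul (measurable_from_top.comp ((measurable_id.div_const a).floor)))
    exact ((((hf.continuous.measurable.comp (h1.add_const a)).sub
      (hf.continuous.measurable.comp h1)).div_const a).pow_const 2).aestronglyMeasurable
  -- pointwise convergence
  have hpt : ∀ x : ℝ, Tendsto (fun a => F a x) (𝓝[>] (0:ℝ)) (𝓝 ((deriv f x) ^ 2)) := by
    intro x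
    have hid : Tendsto (fun a : ℝ => a) (𝓝[>] (0:ℝ)) (𝓝 0) :=
      tendsto_id.mono_left nhdsWithin_le_nhds
    have hcv : Tendsto (fun a : ℝ => a * (⌊x / a⌋ : ℝ)) (𝓝[>] (0:ℝ)) (𝓝 x) := by
      have hlow : Tendsto (fun a : ℝ => x - a) (𝓝[>] (0:ℝ)) (𝓝 x) := by
        simpa using (tendsto_const_nhds (x := x)).sub hid
      refine tendsto_of_tendsto_of_tendsto_of_le_of_le' hlow tendsto_const_nhds ?_ ?_
      · filter_upwards [self_mem_nhdsWithin] with a ha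
        have := hfloor_gt a x ha
        linarith
      · filter_upwards [self_mem_nhdsWithin] with a ha
        exact hfloor_le a x ha
    have hbv : Tendsto (fun a : ℝ => a * (⌊x / a⌋ : ℝ) + a) (𝓝[>] (0:ℝ)) (𝓝 x) := by
      simpa using hcv.add hid
    have hφ : Tendsto (fun a : ℝ => (a * (⌊x / a⌋ : ℝ) + a, a * (⌊x / a⌋ : ℝ)))
        (𝓝[>] (0:ℝ)) (𝓝 (x, x)) := hbv.prodMk_nhds hcv
    have hsd : HasStrictDerivAt f (deriv f x) x := hf.hasStrictDerivAt one_ne_zero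
    have hlo := (hasStrictFDerivAt_iff_isLittleO.mp hsd).comp_tendsto hφ
    have hlo2 : (fun a : ℝ => f (a * (⌊x / a⌋ : ℝ) + a) - f (a * (⌊x / a⌋ : ℝ)) - a * deriv f x)
        =o[𝓝[>] (0:ℝ)] (fun a : ℝ => a) := by
      refine hlo.congr' ?_ ?_
      · refine Filter.Eventually.of_forall fun a => ?_
        simp only [Function.comp, ContinuousLinearMap.smulRight_apply,
          ContinuousLinearMap.one_apply, ContinuousLinearMap.toSpanSingleton_apply, smul_eq_mul]
        ring_nf
      · refine Filter.Eventually.of_forall fun a => ?_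
        simp only [Function.comp]
        ring
    have h0 := hlo2.tendsto_div_nhds_zero
    have hgoal : Tendsto (fun a : ℝ => (f (a * (⌊x / a⌋ : ℝ) + a) - f (a * (⌊x / a⌋ : ℝ))) / a)
        (𝓝[>] (0:ℝ)) (𝓝 (deriv f x)) := by
      have h1 := h0.add (tendsto_const_nhds (x := deriv f x))
      rw [zero_add] at h1
      refine Tendsto.congr' ?_ h1
      filter_upwards [self_mem_nhdsWithin] with a ha
      have hane : a ≠ 0 := ne_of_gt (Set.mem_Ioi.mp ha)
      field_simp
      ring
    exact hgoal.pow 2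
  -- convergence of integrals
  have hB : Tendsto (fun a : ℝ => ∫ x : ℝ, F a x) (𝓝[>] (0:ℝ))
      (𝓝 (∫ x : ℝ, (deriv f x) ^ 2)) := by
    refine MeasureTheory.tendsto_integral_filter_of_dominated_convergence bound ?_ ?_
      hbound_int ?_
    · filter_upwards [self_mem_nhdsWithin] with a ha
      exact hFmeas a ha
    · filter_upwards [Ioc_mem_nhdsGT_of_mem (by norm_num : (0:ℝ) ∈ Set.Ico (0:ℝ) 1)] with a ha
      exact Filter.Eventually.of_forall (hFbound a ha)
    · exact Filter.Eventually.of_forall hpt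
  -- identification of the discrete sum with the integral of the step function
  have hEq : ∀ a : ℝ, a ∈ Set.Ioc (0:ℝ) 1 →
      (1 / a) * ∑' i : ℤ, (f ((i + 1) * a) - f (i * a)) ^ 2 = ∫ x : ℝ, F a x := by
    rintro a ⟨ha, ha1⟩
    set s : ℤ → Set ℝ := fun i => Set.Ico ((i : ℝ) * a) (((i : ℝ) + 1) * a) with hsdef
    have hmem : ∀ (x : ℝ) (i : ℤ), x ∈ s i ↔ ⌊x / a⌋ = i := by
      intro x i
      simp only [hsdef, Set.mem_Ico]
      rw [Int.floor_eq_iff]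
      constructor
      · rintro ⟨h1, h2⟩
        refine ⟨(le_div_iff₀ ha).mpr (by linarith), (div_lt_iff₀ ha).mpr (by push_cast; linarith)⟩
      · rintro ⟨h1, h2⟩
        have h1' := (le_div_iff₀ ha).mp h1
        have h2' := (div_lt_iff₀ ha).mp h2
        constructor
        · linarith
        · push_cast at h2'
          linarith
    have hdisj : Pairwise (Function.onFun Disjoint s) := by
      intro i j hij
      simp only [Function.onFun, Set.disjoint_left]
      intro x hxi hxj
      exact hij (((hmem x i).mp hxi).symm.trans ((hmem x j).mp hxj))
    have hunion : (⋃ i, s i) = Set.univ := by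
      ext x
      simp only [Set.mem_iUnion, Set.mem_univ, iff_true]
      exact ⟨⌊x / a⌋, (hmem x _).mpr rfl⟩
    have hInt : Integrable (F a) := by
      refine hbound_int.mono' (hFmeas a ha) ?_
      exact Filter.Eventually.of_forall (hFbound a ⟨ha, ha1⟩)
    have hsum := MeasureTheory.hasSum_integral_iUnion (μ := volume) (f := F a)
      (fun i : ℤ => measurableSet_Ico) hdisj (by rw [hunion]; exact hInt.integrableOn)
    rw [hunion, Measure.restrict_univ] at hsum
    have hval : ∀ i : ℤ, (∫ x in s i, F a x) = (f (((i : ℝ) + 1) * a) - f ((i : ℝ) * a)) ^ 2 / a := by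
      intro i
      have heq : Set.EqOn (F a)
          (fun _ => ((f (((i : ℝ) + 1) * a) - f ((i : ℝ) * a)) / a) ^ 2) (s i) := by
        intro x hx
        have hfl : ⌊x / a⌋ = i := (hmem x i).mp hx
        have e1 : a * (⌊x / a⌋ : ℝ) + a = ((i : ℝ) + 1) * a := by rw [hfl]; ring
        have e2 : a * (⌊x / a⌋ : ℝ) = (i : ℝ) * a := by rw [hfl]; ring
        simp only [hF, e2]
        have e1' : (i : ℝ) * a + a = ((i : ℝ) + 1) * a := by ring
        rw [e1']
      rw [MeasureTheory.setIntegral_congr_fun measurableSet_Ico heq,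
        MeasureTheory.setIntegral_const]
      have hvol : volume (s i) = ENNReal.ofReal a := by
        simp only [hsdef, Real.volume_Ico]
        congr 1
        ring
      rw [measureReal_def, hvol, ENNReal.toReal_ofReal ha.le, smul_eq_mul]
      field_simp
    calc (1 / a) * ∑' i : ℤ, (f ((i + 1) * a) - f (i * a)) ^ 2
        = ∑' i : ℤ, (f (((i : ℝ) + 1) * a) - f ((i : ℝ) * a)) ^ 2 / a := by
          rw [← tsum_mul_left]
          exact tsum_congr fun i => by ring
      _ = ∑' i : ℤ, ∫ x in s i, F a x := tsum_congr fun i => (hval i).symm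
      _ = ∫ x : ℝ, F a x := hsum.tsum_eq
  refine hB.congr' ?_
  filter_upwards [Ioc_mem_nhdsGT_of_mem (by norm_num : (0:ℝ) ∈ Set.Ico (0:ℝ) 1)] with a ha
  exact (hEq a ha).symm
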